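/- Let m ≥ 3 and n ≥ 1. The number of equivalence classes of signatures of the book graph B(m,n) under switching isomorphism is exactly n+1; indeed, the signatures σ_0, σ_1, …, σ_n form a complete set of representatives, i.e., every signature of B(m,n) is switching isomorphic to exactly one σ_l with 0 ≤ l ≤ n. -/

import Mathlib

/-- Vertices of the book graph `B(m,n)`: `Sum.inl false` is `u`, `Sum.inl true` is `v`,
and `Sum.inr (i, j)` is the vertex `u_{j+1}^{i+1}`. -/
abbrev BookVertex (m n : ℕ) := Bool ⊕ (Fin n × Fin (m - 2))

/-- Adjacency relation of the book graph `B(m,n)`. -/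
def bookAdj (m n : ℕ) : BookVertex m n → BookVertex m n → Prop
  | Sum.inl a, Sum.inl b => a ≠ b
  | Sum.inl false, Sum.inr (_, j) => j.val = 0
  | Sum.inl true, Sum.inr (_, j) => j.val = m - 3
  | Sum.inr (_, j), Sum.inl false => j.val = 0
  | Sum.inr (_, j), Sum.inl true => j.val = m - 3
  | Sum.inr (i, j), Sum.inr (i', j') => i = i' ∧ (j.val + 1 = j'.val ∨ j'.val + 1 = j.val)

/-- The signature `σ_l` of `B(m,n)`: exactly the edges `u u_1^1, …, u u_1^l` are negative. -/
def sigmaL (m n l : ℕ) : BookVertex m n → BookVertex m n → ℤ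
  | Sum.inl false, Sum.inr (i, j) => if j.val = 0 ∧ i.val < l then -1 else 1
  | Sum.inr (i, j), Sum.inl false => if j.val = 0 ∧ i.val < l then -1 else 1
  | _, _ => 1

/-- The signature of `B^{uv}(m,n)`: exactly the edge `uv` is negative. -/
def sigmaUV (m n : ℕ) : BookVertex m n → BookVertex m n → ℤ
  | Sum.inl _, Sum.inl _ => -1
  | _, _ => 1

/-- `γ_m(x) = ∑_{i=0}^{m-2} (-1)^i (x-1)^{m-2-i}`. -/
def gammaP (m : ℕ) (x : ℤ) : ℤ := ∑ i ∈ Finset.range (m - 1), (-1) ^ i * (x - 1) ^ (m - 2 - i)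

/-- Two signatures `σ, τ` of `B(m,n)` are switching isomorphic if there are a graph
automorphism `ψ` and a switching function `s : V → {±1}` with
`τ(ψ x, ψ y) = s x · σ x y · s y` on every edge. -/
def SwitchIso (m n : ℕ) (σ τ : BookVertex m n → BookVertex m n → ℤ) : Prop :=
  ∃ ψ : BookVertex m n ≃ BookVertex m n,
    (∀ x y, bookAdj m n x y ↔ bookAdj m n (ψ x) (ψ y)) ∧
    ∃ s : BookVertex m n → ℤ, (∀ x, s x = 1 ∨ s x = -1) ∧
      ∀ x y, bookAdj m n x y → τ (ψ x) (ψ y) = s x * σ x y * s y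

set_option linter.unusedSectionVars false

namespace BookAux

lemma int_pm_mul {a b : ℤ} (ha : a = 1 ∨ a = -1) (hb : b = 1 ∨ b = -1) :
    a * b = 1 ∨ a * b = -1 := by rcases ha with h|h <;> rcases hb with h'|h' <;> simp [h, h']

lemma int_pm_sq {a : ℤ} (h : a = 1 ∨ a = -1) : a * a = 1 := by rcases h with h|h <;> simp [h]

lemma prod_pm {α : Type*} {s : Finset α} {f : α → ℤ} (h : ∀ x ∈ s, f x = 1 ∨ f x = -1) :
    s.prod f = 1 ∨ s.prod f = -1 :=
  Finset.prod_induction f (fun a => a = 1 ∨ a = -1) (fun _ _ => int_pm_mul) (Or.inl rfl) h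

lemma telescope (g h : ℕ → ℤ) (hg : ∀ x, g x = 1 ∨ g x = -1) (k : ℕ) :
    ∏ j ∈ Finset.range k, (g j * h j * g (j+1)) =
      g 0 * (∏ j ∈ Finset.range k, h j) * g k := by
  induction k with
  | zero => simpa using (int_pm_sq (hg 0)).symm
  | succ k ih =>
    rw [Finset.prod_range_succ, ih, Finset.prod_range_succ]
    have h2 : g k * g k = 1 := int_pm_sq (hg k)
    linear_combination (g 0 * (∏ j ∈ Finset.range k, h j) * h k * g (k+1)) * h2

/-- the vertex `u_{j+1}^{i+1}` (indices mod `m-2`) -/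
def pw (m n : ℕ) (i : Fin n) (j : ℕ) : BookVertex m n :=
  if h : j % (m - 2) < m - 2 then Sum.inr (i, ⟨j % (m-2), h⟩) else Sum.inl false

lemma pw_eq {m n : ℕ} (i : Fin n) {j : ℕ} (h : j < m - 2) :
    pw m n i j = Sum.inr (i, ⟨j, h⟩) := by
  have hj : j % (m-2) = j := Nat.mod_eq_of_lt h
  simp [pw, hj, h]

lemma inr_eq_pw {m n : ℕ} (i : Fin n) (j : Fin (m-2)) :
    Sum.inr (i, j) = pw m n i j.val := by rw [pw_eq i j.isLt]

section adj
variable {m n : ℕ} (hm : 3 ≤ m)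
include hm

lemma adj_uv : bookAdj m n (Sum.inl false) (Sum.inl true) := by simp [bookAdj]

lemma adj_u_pw0 (i : Fin n) : bookAdj m n (Sum.inl false) (pw m n i 0) := by
  rw [pw_eq i (by omega : 0 < m - 2)]; simp [bookAdj]

lemma adj_pwlast_v (i : Fin n) : bookAdj m n (pw m n i (m-3)) (Sum.inl true) := by
  rw [pw_eq i (by omega : m - 3 < m - 2)]; simp [bookAdj]

lemma adj_pw_succ (i : Fin n) {j : ℕ} (h : j + 1 ≤ m - 3) :
    bookAdj m n (pw m n i j) (pw m n i (j+1)) := by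
  rw [pw_eq i (by omega : j < m - 2), pw_eq i (by omega : j + 1 < m - 2)]
  exact ⟨rfl, Or.inl rfl⟩

omit hm in
lemma bookAdj_symm : ∀ {x y : BookVertex m n}, bookAdj m n x y → bookAdj m n y x := by
  rintro (a|⟨i,j⟩) (b|⟨i',j'⟩) h
  · cases a <;> cases b <;> simp_all [bookAdj]
  · cases a <;> simp_all [bookAdj]
  · cases b <;> simp_all [bookAdj]
  · obtain ⟨h1, h2⟩ := h; exact ⟨h1.symm, h2.symm⟩

end adj

end BookAux

namespace BookAux

/-- sign of the `i`-th page cycle -/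
def pageSign (m n : ℕ) (σ : BookVertex m n → BookVertex m n → ℤ) (i : Fin n) : ℤ :=
  σ (Sum.inl false) (Sum.inl true) * σ (Sum.inl false) (pw m n i 0) *
    σ (pw m n i (m-3)) (Sum.inl true) *
    ∏ j ∈ Finset.range (m-3), σ (pw m n i j) (pw m n i (j+1))

def negCount (m n : ℕ) (σ : BookVertex m n → BookVertex m n → ℤ) : ℕ :=
  (Finset.univ.filter fun i : Fin n => pageSign m n σ i = -1).card

section main
variable {m n : ℕ} (hm : 3 ≤ m)
include hm

lemma pageSign_pm (σ : BookVertex m n → BookVertex m n → ℤ)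
    (hσ : ∀ x y, bookAdj m n x y → σ x y = 1 ∨ σ x y = -1) (i : Fin n) :
    pageSign m n σ i = 1 ∨ pageSign m n σ i = -1 := by
  refine int_pm_mul (int_pm_mul (int_pm_mul (hσ _ _ (adj_uv hm)) (hσ _ _ (adj_u_pw0 hm i)))
    (hσ _ _ (adj_pwlast_v hm i))) (prod_pm fun j hj => hσ _ _ (adj_pw_succ hm i ?_))
  simp only [Finset.mem_range] at hj; omega

lemma sigmaL_symm (l : ℕ) (x y : BookVertex m n) : sigmaL m n l x y = sigmaL m n l y x := by
  rcases x with (a|⟨i,j⟩) <;> rcases y with (b|⟨i',j'⟩)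
  · cases a <;> cases b <;> rfl
  · cases a <;> rfl
  · cases b <;> rfl
  · rfl

lemma pageSign_sigmaL (l : ℕ) (i : Fin n) :
    pageSign m n (sigmaL m n l) i = if i.val < l then -1 else 1 := by
  unfold pageSign
  rw [pw_eq i (by omega : 0 < m - 2), pw_eq i (by omega : m - 3 < m - 2)]
  have h1 : ∀ j ∈ Finset.range (m-3),
      sigmaL m n l (pw m n i j) (pw m n i (j+1)) = 1 := by
    intro j hj
    simp only [Finset.mem_range] at hj
    rw [pw_eq i (by omega : j < m-2), pw_eq i (by omega : j+1 < m-2)]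
    rfl
  rw [Finset.prod_congr rfl h1]
  simp [sigmaL]

lemma card_val_lt {l : ℕ} (hl : l ≤ n) :
    (Finset.univ.filter fun i : Fin n => i.val < l).card = l := by
  have : (Finset.univ.filter fun i : Fin n => i.val < l)
      = (Finset.range l).attachFin (fun x hx => by
          simp only [Finset.mem_range] at hx; omega) := by
    ext i
    simp [Finset.mem_attachFin]
  rw [this, Finset.card_attachFin, Finset.card_range]

lemma negCount_sigmaL {l : ℕ} (hl : l ≤ n) : negCount m n (sigmaL m n l) = l := by
  unfold negCount
  rw [Finset.filter_congr (q := fun i : Fin n => i.val < l) (fun i _ => by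
    rw [pageSign_sigmaL hm]
    by_cases h : i.val < l <;> simp [h])]
  exact card_val_lt hm hl

lemma negCount_le (σ : BookVertex m n → BookVertex m n → ℤ) : negCount m n σ ≤ n := by
  unfold negCount
  have := Finset.card_filter_le (Finset.univ : Finset (Fin n))
    (fun i : Fin n => pageSign m n σ i = -1)
  simpa using this


omit hm in
lemma sigmaL_ll (l : ℕ) (a b : Bool) : sigmaL m n l (Sum.inl a) (Sum.inl b) = 1 := by
  cases a <;> cases b <;> rfl

omit hm in
lemma sigmaL_u_r (l : ℕ) (i : Fin n) (j : Fin (m-2)) :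
    sigmaL m n l (Sum.inl false) (Sum.inr (i,j)) = if j.val = 0 ∧ i.val < l then -1 else 1 := rfl

omit hm in
lemma sigmaL_r_u (l : ℕ) (i : Fin n) (j : Fin (m-2)) :
    sigmaL m n l (Sum.inr (i,j)) (Sum.inl false) = if j.val = 0 ∧ i.val < l then -1 else 1 := rfl

omit hm in
lemma sigmaL_v_r (l : ℕ) (i : Fin n) (j : Fin (m-2)) :
    sigmaL m n l (Sum.inl true) (Sum.inr (i,j)) = 1 := rfl

omit hm in
lemma sigmaL_r_v (l : ℕ) (i : Fin n) (j : Fin (m-2)) :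
    sigmaL m n l (Sum.inr (i,j)) (Sum.inl true) = 1 := rfl

omit hm in
lemma sigmaL_r_r (l : ℕ) (i i' : Fin n) (j j' : Fin (m-2)) :
    sigmaL m n l (Sum.inr (i,j)) (Sum.inr (i',j')) = 1 := rfl

end main

/-- switching function making all tree edges positive -/
def swFun (m n : ℕ) (σ : BookVertex m n → BookVertex m n → ℤ) : BookVertex m n → ℤ
  | Sum.inl false => 1
  | Sum.inl true => σ (Sum.inl false) (Sum.inl true)
  | Sum.inr (i, j) => (∏ k ∈ Finset.Ico j.val (m-3), σ (pw m n i k) (pw m n i (k+1))) *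
      (σ (pw m n i (m-3)) (Sum.inl true) * σ (Sum.inl false) (Sum.inl true))

section main2
variable {m n : ℕ} (hm : 3 ≤ m) {σ : BookVertex m n → BookVertex m n → ℤ}
include hm

lemma swFun_pw (i : Fin n) {j : ℕ} (hj : j < m - 2) :
    swFun m n σ (pw m n i j) =
      (∏ k ∈ Finset.Ico j (m-3), σ (pw m n i k) (pw m n i (k+1))) *
        (σ (pw m n i (m-3)) (Sum.inl true) * σ (Sum.inl false) (Sum.inl true)) := by
  rw [pw_eq i hj]; rfl

lemma swFun_pm (hσsign : ∀ x y, bookAdj m n x y → σ x y = 1 ∨ σ x y = -1) :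
    ∀ x, swFun m n σ x = 1 ∨ swFun m n σ x = -1 := by
  rintro ((_|_)|⟨i,j⟩)
  · exact Or.inl rfl
  · exact hσsign _ _ (adj_uv hm)
  · refine int_pm_mul (prod_pm fun k hk => hσsign _ _ (adj_pw_succ hm i ?_))
      (int_pm_mul (hσsign _ _ (adj_pwlast_v hm i)) (hσsign _ _ (adj_uv hm)))
    simp only [Finset.mem_Ico] at hk; omega

lemma subtypeCongr_prop {α : Type*} {p q : α → Prop} [DecidablePred p] [DecidablePred q]
    (e : {x // p x} ≃ {x // q x}) (f : {x // ¬p x} ≃ {x // ¬q x}) (a : α) :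
    q (Equiv.subtypeCongr e f a) ↔ p a := by
  by_cases h : p a
  · have he : Equiv.subtypeCongr e f a = ↑(e ⟨a, h⟩) := by
      simp [Equiv.subtypeCongr, h]
    rw [he]
    simpa [h] using (e ⟨a, h⟩).2
  · have he : Equiv.subtypeCongr e f a = ↑(f ⟨a, h⟩) := by
      simp [Equiv.subtypeCongr, h]
    rw [he]
    simpa [h] using (f ⟨a, h⟩).2

lemma exists_iso (hσsym : ∀ x y, σ x y = σ y x)
    (hσsign : ∀ x y, bookAdj m n x y → σ x y = 1 ∨ σ x y = -1) :
    SwitchIso m n σ (sigmaL m n (negCount m n σ)) := by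
  classical
  set l := negCount m n σ with hldef
  have hln : l ≤ n := negCount_le hm σ
  have hcard1 : Fintype.card {i : Fin n // pageSign m n σ i = -1} =
      Fintype.card {i : Fin n // i.val < l} := by
    rw [Fintype.card_subtype, Fintype.card_subtype, card_val_lt hm hln]; rfl
  have hcard2 : Fintype.card {i : Fin n // ¬ pageSign m n σ i = -1} =
      Fintype.card {i : Fin n // ¬ i.val < l} := by
    rw [Fintype.card_subtype_compl, Fintype.card_subtype_compl, hcard1]
  set π : Equiv.Perm (Fin n) :=
    Equiv.subtypeCongr (Fintype.equivOfCardEq hcard1) (Fintype.equivOfCardEq hcard2) with hπdef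
  have hπ : ∀ i : Fin n, ((π i).val < l ↔ pageSign m n σ i = -1) := fun i =>
    subtypeCongr_prop hm (q := fun i : Fin n => i.val < l) _ _ i
  refine ⟨Equiv.sumCongr (Equiv.refl Bool) (Equiv.prodCongr π (Equiv.refl (Fin (m-2)))),
    ?_, swFun m n σ, swFun_pm hm hσsign, ?_⟩
  · rintro ((a|a)|⟨i,j⟩) ((b|b)|⟨i',j'⟩) <;>
      simp [bookAdj, Equiv.sumCongr_apply, Sum.map, Equiv.prodCongr_apply, Prod.map,
        EmbeddingLike.apply_eq_iff_eq]
  · rintro ((a|a)|⟨i,j⟩) ((b|b)|⟨i',j'⟩) hxy <;>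
      simp only [Equiv.sumCongr_apply, Sum.map_inl, Sum.map_inr, Equiv.prodCongr_apply,
        Prod.map_apply, Equiv.refl_apply] <;>
      simp only [bookAdj] at hxy
    -- case u u : contradiction
    · exact absurd rfl hxy
    -- case u v
    · rcases hσsign _ _ (adj_uv hm) with h|h <;>
        simp [sigmaL_ll, swFun, h]
    -- case u, inr(i',j') with j'.val = 0
    · have hin : (Sum.inr (i',j') : BookVertex m n) = pw m n i' 0 := by
        rw [inr_eq_pw i' j', hxy]
      rw [sigmaL_u_r, hin, swFun_pw hm i' (by omega)]
      have hcond : (j'.val = 0 ∧ (π i').val < l) ↔ pageSign m n σ i' = -1 := by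
        rw [hπ i']; simp [hxy]
      rw [if_congr hcond rfl rfl]
      have key2 : swFun m n σ (Sum.inl false) * σ (Sum.inl false) (pw m n i' 0) *
          ((∏ k ∈ Finset.Ico 0 (m-3), σ (pw m n i' k) (pw m n i' (k+1))) *
            (σ (pw m n i' (m-3)) (Sum.inl true) * σ (Sum.inl false) (Sum.inl true))) =
          pageSign m n σ i' := by
        rw [pageSign, ← Finset.range_eq_Ico]
        show 1 * _ * _ = _
        ring
      rw [key2]
      rcases pageSign_pm hm σ hσsign i' with h|h <;> simp [h]
    -- case v u
    · rw [hσsym (Sum.inl true) (Sum.inl false)]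
      rcases hσsign _ _ (adj_uv hm) with h|h <;> simp [sigmaL_ll, swFun, h]
    -- case v v
    · exact absurd rfl hxy
    -- case v, inr(i',j') with j'.val = m-3
    · have hin : (Sum.inr (i',j') : BookVertex m n) = pw m n i' (m-3) := by
        rw [inr_eq_pw i' j', hxy]
      rw [sigmaL_v_r, hin, swFun_pw hm i' (by omega), Finset.Ico_self, Finset.prod_empty,
        hσsym (Sum.inl true) (pw m n i' (m-3))]
      rcases hσsign _ _ (adj_uv hm) with hA|hA <;>
        rcases hσsign _ _ (adj_pwlast_v hm i') with hB|hB <;>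
          simp [swFun, hA, hB]
    -- case inr(i,j), u with j.val = 0
    · have hin : (Sum.inr (i,j) : BookVertex m n) = pw m n i 0 := by
        rw [inr_eq_pw i j, hxy]
      rw [sigmaL_r_u, hin, swFun_pw hm i (by omega)]
      have hcond : (j.val = 0 ∧ (π i).val < l) ↔ pageSign m n σ i = -1 := by
        rw [hπ i]; simp [hxy]
      rw [if_congr hcond rfl rfl, hσsym (pw m n i 0) (Sum.inl false)]
      have key2 : (∏ k ∈ Finset.Ico 0 (m-3), σ (pw m n i k) (pw m n i (k+1))) *
          (σ (pw m n i (m-3)) (Sum.inl true) * σ (Sum.inl false) (Sum.inl true)) *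
          σ (Sum.inl false) (pw m n i 0) * swFun m n σ (Sum.inl false) =
          pageSign m n σ i := by
        rw [pageSign, ← Finset.range_eq_Ico]
        show _ * _ * 1 = _
        ring
      rw [key2]
      rcases pageSign_pm hm σ hσsign i with h|h <;> simp [h]
    -- case inr(i,j), v with j.val = m-3
    · have hin : (Sum.inr (i,j) : BookVertex m n) = pw m n i (m-3) := by
        rw [inr_eq_pw i j, hxy]
      rw [sigmaL_r_v, hin, swFun_pw hm i (by omega), Finset.Ico_self, Finset.prod_empty]
      rcases hσsign _ _ (adj_uv hm) with hA|hA <;>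
        rcases hσsign _ _ (adj_pwlast_v hm i) with hB|hB <;>
          simp [swFun, hA, hB]
    -- case inr inr
    · obtain ⟨h1, hd⟩ := hxy
      subst h1
      rw [sigmaL_r_r]
      rcases hd with h|h
      · have hj1 : (Sum.inr (i,j) : BookVertex m n) = pw m n i j.val := inr_eq_pw i j
        have hj2 : (Sum.inr (i,j') : BookVertex m n) = pw m n i (j.val+1) := by
          rw [inr_eq_pw i j', ← h]
        have hlt : j.val + 1 ≤ m - 3 := by have := j'.isLt; omega
        rw [hj1, hj2, swFun_pw hm i (by omega), swFun_pw hm i (by omega),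
          Finset.prod_eq_prod_Ico_succ_bot (by omega : j.val < m - 3)]
        rcases prod_pm (s := Finset.Ico (j.val+1) (m-3))
            (f := fun k => σ (pw m n i k) (pw m n i (k+1)))
            (fun k hk => hσsign _ _ (adj_pw_succ hm i (by
              simp only [Finset.mem_Ico] at hk; omega))) with hP|hP <;>
          rcases hσsign _ _ (adj_pw_succ hm i hlt) with hE|hE <;>
            rcases hσsign _ _ (adj_pwlast_v hm i) with hC|hC <;>
              rcases hσsign _ _ (adj_uv hm) with hD|hD <;>
                simp [hP, hE, hC, hD]
      · have hj2 : (Sum.inr (i,j) : BookVertex m n) = pw m n i (j'.val+1) := by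
          rw [inr_eq_pw i j, ← h]
        have hj1 : (Sum.inr (i,j') : BookVertex m n) = pw m n i j'.val := inr_eq_pw i j'
        have hlt : j'.val + 1 ≤ m - 3 := by have := j.isLt; omega
        rw [hj2, hj1, hσsym (pw m n i (j'.val+1)) (pw m n i j'.val),
          swFun_pw hm i (by omega), swFun_pw hm i (by omega),
          Finset.prod_eq_prod_Ico_succ_bot (by omega : j'.val < m - 3)]
        rcases prod_pm (s := Finset.Ico (j'.val+1) (m-3))
            (f := fun k => σ (pw m n i k) (pw m n i (k+1)))
            (fun k hk => hσsign _ _ (adj_pw_succ hm i (by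
              simp only [Finset.mem_Ico] at hk; omega))) with hP|hP <;>
          rcases hσsign _ _ (adj_pw_succ hm i hlt) with hE|hE <;>
            rcases hσsign _ _ (adj_pwlast_v hm i) with hC|hC <;>
              rcases hσsign _ _ (adj_uv hm) with hD|hD <;>
                simp [hP, hE, hC, hD]
end main2
section inv
variable {m n : ℕ} (hm : 3 ≤ m)
include hm

omit hm in
lemma adj_inr_cases {x : BookVertex m n} {i : Fin n} {j : Fin (m-2)}
    (h : bookAdj m n x (Sum.inr (i,j))) :
    (x = Sum.inl false ∧ j.val = 0) ∨ (x = Sum.inl true ∧ j.val = m-3) ∨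
      (∃ j' : Fin (m-2), x = Sum.inr (i, j') ∧ j'.val < m - 2 ∧
        (j'.val + 1 = j.val ∨ j.val + 1 = j'.val)) := by
  rcases x with ((_|_)|⟨i0,j0⟩)
  · exact Or.inl ⟨rfl, h⟩
  · exact Or.inr (Or.inl ⟨rfl, h⟩)
  · obtain ⟨h1, hd⟩ := h
    subst h1
    exact Or.inr (Or.inr ⟨j0, rfl, j0.isLt, hd⟩)

omit hm in
lemma adj_u_cases {x : BookVertex m n} (h : bookAdj m n (Sum.inl false) x) :
    x = Sum.inl true ∨ ∃ (i : Fin n) (j : Fin (m-2)), x = Sum.inr (i,j) ∧ j.val = 0 := by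
  rcases x with ((_|_)|⟨i0,j0⟩)
  · exact absurd rfl h
  · exact Or.inl rfl
  · exact Or.inr ⟨i0, j0, rfl, h⟩

omit hm in
lemma adj_v_cases {x : BookVertex m n} (h : bookAdj m n (Sum.inl true) x) :
    x = Sum.inl false ∨ ∃ (i : Fin n) (j : Fin (m-2)), x = Sum.inr (i,j) ∧ j.val = m-3 := by
  rcases x with ((_|_)|⟨i0,j0⟩)
  · exact Or.inl rfl
  · exact absurd rfl h
  · exact Or.inr ⟨i0, j0, rfl, h⟩

lemma psi_inl (hn2 : 2 ≤ n) (ψ : BookVertex m n ≃ BookVertex m n)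
    (hψ : ∀ x y, bookAdj m n x y ↔ bookAdj m n (ψ x) (ψ y)) (a : Bool) :
    ∃ b : Bool, ψ (Sum.inl a) = Sum.inl b := by
  rcases he : ψ (Sum.inl a) with (b|⟨i,j⟩)
  · exact ⟨b, rfl⟩
  exfalso
  have hjlt := j.isLt
  set x1 : BookVertex m n := Sum.inl (!a) with hx1
  set x2 : BookVertex m n := Sum.inr (⟨0, by omega⟩, if a then ⟨m-3, by omega⟩ else ⟨0, by omega⟩) with hx2
  set x3 : BookVertex m n := Sum.inr (⟨1, by omega⟩, if a then ⟨m-3, by omega⟩ else ⟨0, by omega⟩) with hx3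
  have ha1 : bookAdj m n (Sum.inl a) x1 := by cases a <;> simp [bookAdj, hx1]
  have ha2 : bookAdj m n (Sum.inl a) x2 := by cases a <;> simp [bookAdj, hx2]
  have ha3 : bookAdj m n (Sum.inl a) x3 := by cases a <;> simp [bookAdj, hx3]
  have inj2 : ∀ y z : BookVertex m n, y ≠ z → ψ y ≠ ψ z := fun y z h e => h (ψ.injective e)
  have hd12 : ψ x1 ≠ ψ x2 := inj2 _ _ (by rw [hx1, hx2]; simp)
  have hd13 : ψ x1 ≠ ψ x3 := inj2 _ _ (by rw [hx1, hx3]; simp)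
  have hd23 : ψ x2 ≠ ψ x3 := inj2 _ _ (by rw [hx2, hx3]; simp [Fin.ext_iff])
  have c1 := adj_inr_cases (bookAdj_symm (he ▸ (hψ _ _).mp ha1))
  have c2 := adj_inr_cases (bookAdj_symm (he ▸ (hψ _ _).mp ha2))
  have c3 := adj_inr_cases (bookAdj_symm (he ▸ (hψ _ _).mp ha3))
  rcases c1 with ⟨e1,f1⟩|⟨e1,f1⟩|⟨j1,e1,g1,f1⟩ <;>
    rcases c2 with ⟨e2,f2⟩|⟨e2,f2⟩|⟨j2,e2,g2,f2⟩ <;>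
      rcases c3 with ⟨e3,f3⟩|⟨e3,f3⟩|⟨j3,e3,g3,f3⟩ <;>
        rw [e1] at hd12 hd13 <;> rw [e2] at hd12 hd23 <;> rw [e3] at hd13 hd23 <;>
          simp only [ne_eq, Sum.inl.injEq, Sum.inr.injEq, Prod.mk.injEq, Fin.ext_iff,
            true_and, Bool.true_eq_false, Bool.false_eq_true, not_false_eq_true,
            reduceCtorEq, not_true_eq_false, not_and] at hd12 hd13 hd23 <;>
          omega

omit hm in
lemma pw_ne_inl {i : Fin n} {j : ℕ} (hj : j < m - 2) (b : Bool) :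
    pw m n i j ≠ Sum.inl b := by rw [pw_eq i hj]; simp

lemma collect4 (su sv s0 s3 a b c P : ℤ) (h1 : su*su = 1) (h2 : sv*sv = 1)
    (h3 : s0*s0 = 1) (h4 : s3*s3 = 1) :
    (su*a*sv) * (su*b*s0) * (s3*c*sv) * (s0*P*s3) = a*b*c*P := by
  linear_combination (a*b*c*P*sv*sv*s0*s0*s3*s3) * h1 + (a*b*c*P*s0*s0*s3*s3) * h2 +
    (a*b*c*P*s3*s3) * h3 + (a*b*c*P) * h4

lemma negCount_inv (hn2 : 2 ≤ n) {σ τ : BookVertex m n → BookVertex m n → ℤ}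
    (hσsym : ∀ x y, σ x y = σ y x) (h : SwitchIso m n σ τ) :
    negCount m n σ = negCount m n τ := by
  obtain ⟨ψ, hψ, s, hs, hval⟩ := h
  obtain ⟨b0, h0⟩ := psi_inl hm hn2 ψ hψ false
  obtain ⟨b1, h1⟩ := psi_inl hm hn2 ψ hψ true
  have hne : b0 ≠ b1 := by
    intro e
    have : ψ (Sum.inl false) = ψ (Sum.inl true) := by rw [h0, h1, e]
    simpa using ψ.injective this
  -- In either case we produce f with the pageSign property
  have main : ∃ f : Fin n → Fin n, Function.Injective f ∧
      ∀ i, pageSign m n τ (f i) = pageSign m n σ i := by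
    cases b0 with
    | false =>
      -- case A : ψ fixes u and v
      have hu : ψ (Sum.inl false) = Sum.inl false := h0
      have hv : ψ (Sum.inl true) = Sum.inl true := by
        cases b1 with
        | false => exact absurd rfl hne
        | true => exact h1
      have step0 : ∀ i : Fin n, ∃ i', ψ (pw m n i 0) = pw m n i' 0 := by
        intro i
        have hadj := (hψ _ _).mp (adj_u_pw0 hm i)
        rw [hu] at hadj
        rcases adj_u_cases hadj with he | ⟨i', j', he, hj'⟩
        · exact absurd (ψ.injective (he.trans hv.symm)) (pw_ne_inl (by omega) true)
        · exact ⟨i', by rw [he, inr_eq_pw i' j', hj']⟩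
      choose f hf using step0
      have hstep : ∀ j : ℕ, j ≤ m - 3 → ∀ i, ψ (pw m n i j) = pw m n (f i) j := by
        intro j
        induction j using Nat.strong_induction_on with
        | _ j IH =>
          intro hj i
          match j with
          | 0 => exact hf i
          | (k+1) =>
            have hadj := (hψ _ _).mp (adj_pw_succ hm i hj)
            rw [IH k (by omega) (by omega) i] at hadj
            rw [pw_eq (f i) (by omega : k < m - 2)] at hadj
            rcases adj_inr_cases (bookAdj_symm hadj) with ⟨he, hj0⟩ | ⟨he, hj0⟩ | ⟨j', he, hj', hd⟩
            · exact absurd (ψ.injective (he.trans hu.symm)) (pw_ne_inl (by omega) false)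
            · simp only at hj0; omega
            · simp only at hd
              rcases hd with hd | hd
              · -- j' = k - 1 : contradiction with IH at k-1
                exfalso
                obtain ⟨k0, rfl⟩ : ∃ k0, k = k0 + 1 := ⟨k-1, by omega⟩
                have hIH := IH k0 (by omega) (by omega) i
                have hpp : Sum.inr (f i, j') = pw m n (f i) k0 := by
                  rw [inr_eq_pw (f i) j', show j'.val = k0 by omega]
                rw [hpp, ← hIH] at he
                have := ψ.injective he
                rw [pw_eq i (by omega : k0+1+1 < m-2), pw_eq i (by omega : k0 < m-2)] at this
                simp only [Sum.inr.injEq, Prod.mk.injEq, Fin.mk.injEq] at this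
                omega
              · rw [he, inr_eq_pw (f i) j', show j'.val = k + 1 by omega]
      have hinj : Function.Injective f := by
        intro i i' he
        have : ψ (pw m n i 0) = ψ (pw m n i' 0) := by rw [hf i, hf i', he]
        have h2 := ψ.injective this
        rw [pw_eq i (by omega : 0 < m-2), pw_eq i' (by omega : 0 < m-2)] at h2
        simpa using h2
      refine ⟨f, hinj, fun i => ?_⟩
      have e0 := hstep 0 (by omega) i
      have e3 := hstep (m-3) le_rfl i
      have hτ1 : τ (Sum.inl false) (Sum.inl true) =
          s (Sum.inl false) * σ (Sum.inl false) (Sum.inl true) * s (Sum.inl true) := by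
        have := hval _ _ (adj_uv hm); rwa [hu, hv] at this
      have hτ2 : τ (Sum.inl false) (pw m n (f i) 0) =
          s (Sum.inl false) * σ (Sum.inl false) (pw m n i 0) * s (pw m n i 0) := by
        have := hval _ _ (adj_u_pw0 hm i); rwa [hu, e0] at this
      have hτ3 : τ (pw m n (f i) (m-3)) (Sum.inl true) =
          s (pw m n i (m-3)) * σ (pw m n i (m-3)) (Sum.inl true) * s (Sum.inl true) := by
        have := hval _ _ (adj_pwlast_v hm i); rwa [hv, e3] at this
      have hτ4 : ∀ k ∈ Finset.range (m-3), τ (pw m n (f i) k) (pw m n (f i) (k+1)) =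
          s (pw m n i k) * σ (pw m n i k) (pw m n i (k+1)) * s (pw m n i (k+1)) := by
        intro k hk
        simp only [Finset.mem_range] at hk
        have := hval _ _ (adj_pw_succ hm i (by omega : k+1 ≤ m-3))
        rwa [hstep k (by omega) i, hstep (k+1) (by omega) i] at this
      unfold pageSign
      rw [hτ1, hτ2, hτ3, Finset.prod_congr rfl hτ4,
        telescope (fun k => s (pw m n i k)) _ (fun k => hs _) (m-3)]
      exact collect4 hm _ _ _ _ _ _ _ _ (int_pm_sq (hs _)) (int_pm_sq (hs _))
        (int_pm_sq (hs _)) (int_pm_sq (hs _))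
    | true =>
      -- case B : ψ swaps u and v
      have hu : ψ (Sum.inl false) = Sum.inl true := h0
      have hv : ψ (Sum.inl true) = Sum.inl false := by
        cases b1 with
        | false => exact h1
        | true => exact absurd rfl hne
      have step0 : ∀ i : Fin n, ∃ i', ψ (pw m n i 0) = pw m n i' (m-3) := by
        intro i
        have hadj := (hψ _ _).mp (adj_u_pw0 hm i)
        rw [hu] at hadj
        rcases adj_v_cases hadj with he | ⟨i', j', he, hj'⟩
        · exact absurd (ψ.injective (he.trans hv.symm)) (pw_ne_inl (by omega) true)
        · exact ⟨i', by rw [he, inr_eq_pw i' j', hj']⟩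
      choose f hf using step0
      have hstep : ∀ j : ℕ, j ≤ m - 3 → ∀ i, ψ (pw m n i j) = pw m n (f i) (m-3-j) := by
        intro j
        induction j using Nat.strong_induction_on with
        | _ j IH =>
          intro hj i
          match j with
          | 0 => simpa using hf i
          | (k+1) =>
            have hadj := (hψ _ _).mp (adj_pw_succ hm i hj)
            rw [IH k (by omega) (by omega) i] at hadj
            rw [pw_eq (f i) (by omega : m-3-k < m - 2)] at hadj
            rcases adj_inr_cases (bookAdj_symm hadj) with ⟨he, hj0⟩ | ⟨he, hj0⟩ | ⟨j', he, hj', hd⟩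
            · simp only at hj0; omega
            · exact absurd (ψ.injective (he.trans hu.symm)) (pw_ne_inl (by omega) false)
            · simp only at hd
              rcases hd with hd | hd
              · rw [he, inr_eq_pw (f i) j', show j'.val = m-3-(k+1) by omega]
              · -- j'.val = m-3-k+1 : either out of range (k=0) or image of pw i (k-1)
                exfalso
                rcases Nat.eq_zero_or_pos k with rfl | hk
                · omega
                obtain ⟨k0, rfl⟩ : ∃ k0, k = k0 + 1 := ⟨k-1, by omega⟩
                have hIH := IH k0 (by omega) (by omega) i
                have hpp : Sum.inr (f i, j') = pw m n (f i) (m-3-k0) := by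
                  rw [inr_eq_pw (f i) j', show j'.val = m-3-k0 by omega]
                rw [hpp, ← hIH] at he
                have := ψ.injective he
                rw [pw_eq i (by omega : k0+1+1 < m-2), pw_eq i (by omega : k0 < m-2)] at this
                simp only [Sum.inr.injEq, Prod.mk.injEq, Fin.mk.injEq] at this
                omega
      have hinj : Function.Injective f := by
        intro i i' he
        have : ψ (pw m n i 0) = ψ (pw m n i' 0) := by rw [hf i, hf i', he]
        have h2 := ψ.injective this
        rw [pw_eq i (by omega : 0 < m-2), pw_eq i' (by omega : 0 < m-2)] at h2
        simpa using h2
      refine ⟨f, hinj, fun i => ?_⟩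
      have e0 : ψ (pw m n i (m-3)) = pw m n (f i) 0 := by
        have := hstep (m-3) le_rfl i; rwa [Nat.sub_self] at this
      have e3 : ψ (pw m n i 0) = pw m n (f i) (m-3) := hf i
      have hτ1 : τ (Sum.inl false) (Sum.inl true) =
          s (Sum.inl true) * σ (Sum.inl true) (Sum.inl false) * s (Sum.inl false) := by
        have := hval _ _ (bookAdj_symm (adj_uv hm)); rwa [hu, hv] at this
      have hτ2 : τ (Sum.inl false) (pw m n (f i) 0) =
          s (Sum.inl true) * σ (Sum.inl true) (pw m n i (m-3)) * s (pw m n i (m-3)) := by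
        have := hval _ _ (bookAdj_symm (adj_pwlast_v hm i)); rwa [hv, e0] at this
      have hτ3 : τ (pw m n (f i) (m-3)) (Sum.inl true) =
          s (pw m n i 0) * σ (pw m n i 0) (Sum.inl false) * s (Sum.inl false) := by
        have := hval _ _ (bookAdj_symm (adj_u_pw0 hm i)); rwa [hu, e3] at this
      have hτ4 : ∀ k ∈ Finset.range (m-3), τ (pw m n (f i) k) (pw m n (f i) (k+1)) =
          s (pw m n i (m-3-k)) * σ (pw m n i (m-3-k)) (pw m n i (m-3-(k+1))) *
            s (pw m n i (m-3-(k+1))) := by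
        intro k hk
        simp only [Finset.mem_range] at hk
        have hadj : bookAdj m n (pw m n i (m-3-k)) (pw m n i (m-3-(k+1))) := by
          have := adj_pw_succ hm i (show (m-3-(k+1))+1 ≤ m-3 by omega)
          rw [show m-3-(k+1)+1 = m-3-k by omega] at this
          exact bookAdj_symm this
        have := hval _ _ hadj
        rwa [hstep (m-3-k) (by omega) i, hstep (m-3-(k+1)) (by omega) i,
          show m-3-(m-3-k) = k by omega, show m-3-(m-3-(k+1)) = k+1 by omega] at this
      unfold pageSign
      rw [hτ1, hτ2, hτ3, Finset.prod_congr rfl hτ4]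
      have hrefl : ∀ k ∈ Finset.range (m-3),
          s (pw m n i (m-3-k)) * σ (pw m n i (m-3-k)) (pw m n i (m-3-(k+1))) *
            s (pw m n i (m-3-(k+1))) =
          (fun j => s (pw m n i j) * σ (pw m n i j) (pw m n i (j+1)) * s (pw m n i (j+1)))
            ((m-3) - 1 - k) := by
        intro k hk
        simp only [Finset.mem_range] at hk
        simp only
        rw [show (m-3) - 1 - k + 1 = m-3-k by omega, show (m-3) - 1 - k = m-3-(k+1) by omega,
          hσsym (pw m n i (m-3-k)) (pw m n i (m-3-(k+1)))]
        ring
      rw [Finset.prod_congr rfl hrefl,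
        Finset.prod_range_reflect (fun j => s (pw m n i j) * σ (pw m n i j) (pw m n i (j + 1)) *
          s (pw m n i (j + 1))) (m-3),
        telescope (fun k => s (pw m n i k)) _ (fun k => hs _) (m-3),
        hσsym (Sum.inl true) (Sum.inl false), hσsym (Sum.inl true) (pw m n i (m-3)),
        hσsym (pw m n i 0) (Sum.inl false)]
      rcases hs (Sum.inl false) with q1|q1 <;> rcases hs (Sum.inl true) with q2|q2 <;>
        rcases hs (pw m n i 0) with q3|q3 <;> rcases hs (pw m n i (m-3)) with q4|q4 <;>
          rw [q1, q2, q3, q4] <;> ring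
  -- conclude
  obtain ⟨f, hinj, hps⟩ := main
  unfold negCount
  apply Finset.card_bij (fun i _ => f i)
  · intro a ha
    simp only [Finset.mem_filter, Finset.mem_univ, true_and] at ha ⊢
    rw [hps a]; exact ha
  · intro a _ b _ he
    exact hinj he
  · intro b hb
    simp only [Finset.mem_filter, Finset.mem_univ, true_and] at hb ⊢
    obtain ⟨a, rfl⟩ := (Finite.injective_iff_surjective.mp hinj) b
    exact ⟨a, by rw [← hps a]; exact hb, rfl⟩

end inv


def IsBal (m n : ℕ) (σ : BookVertex m n → BookVertex m n → ℤ) : Prop :=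
  ∃ t : BookVertex m n → ℤ, (∀ x, t x = 1 ∨ t x = -1) ∧
    ∀ x y, bookAdj m n x y → σ x y = t x * t y

section bal
variable {m n : ℕ} (hm : 3 ≤ m) {σ τ : BookVertex m n → BookVertex m n → ℤ}

omit hm in
lemma bal_fwd (h : SwitchIso m n σ τ) (hb : IsBal m n σ) : IsBal m n τ := by
  obtain ⟨ψ, hψ, s, hs, hval⟩ := h
  obtain ⟨t, ht, htv⟩ := hb
  refine ⟨fun z => s (ψ.symm z) * t (ψ.symm z), fun z => int_pm_mul (hs _) (ht _), ?_⟩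
  intro x y hxy
  have hxy' : bookAdj m n (ψ.symm x) (ψ.symm y) := by
    have := (hψ (ψ.symm x) (ψ.symm y)).mpr
    simp only [Equiv.apply_symm_apply] at this
    exact this hxy
  have := hval _ _ hxy'
  simp only [Equiv.apply_symm_apply] at this
  rw [this, htv _ _ hxy']
  ring

omit hm in
lemma bal_bwd (h : SwitchIso m n σ τ) (hb : IsBal m n τ) : IsBal m n σ := by
  obtain ⟨ψ, hψ, s, hs, hval⟩ := h
  obtain ⟨t, ht, htv⟩ := hb
  refine ⟨fun z => s z * t (ψ z), fun z => int_pm_mul (hs _) (ht _), ?_⟩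
  intro x y hxy
  have h1 := hval _ _ hxy
  have h2 := htv _ _ ((hψ _ _).mp hxy)
  have q1 := int_pm_sq (hs x)
  have q2 := int_pm_sq (hs y)
  have : σ x y = s x * τ (ψ x) (ψ y) * s y := by
    rw [h1]
    linear_combination (-(σ x y * s y * s y)) * q1 - (σ x y) * q2
  rw [this, h2]
  ring

omit hm in
lemma bal_sigma0 : IsBal m n (sigmaL m n 0) := by
  refine ⟨fun _ => 1, fun _ => Or.inl rfl, ?_⟩
  rintro ((a|a)|⟨i,j⟩) ((b|b)|⟨i',j'⟩) _ <;>
    simp [sigmaL_ll, sigmaL_u_r, sigmaL_r_u, sigmaL_v_r, sigmaL_r_v, sigmaL_r_r]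

include hm in
lemma not_bal_sigma1 (hn : 1 ≤ n) : ¬ IsBal m n (sigmaL m n 1) := by
  rintro ⟨t, ht, htv⟩
  set i0 : Fin n := ⟨0, hn⟩ with hi0
  have h1 : pageSign m n (sigmaL m n 1) i0 = -1 := by
    rw [pageSign_sigmaL hm]; simp [hi0]
  have h2 : pageSign m n (sigmaL m n 1) i0 = 1 := by
    unfold pageSign
    have hp : ∏ k ∈ Finset.range (m-3), (t (pw m n i0 k) * t (pw m n i0 (k+1))) =
        t (pw m n i0 0) * (∏ _k ∈ Finset.range (m-3), (1:ℤ)) * t (pw m n i0 (m-3)) := by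
      rw [← telescope (fun k => t (pw m n i0 k)) (fun _ => 1) (fun k => ht _) (m-3)]
      exact Finset.prod_congr rfl (fun k _ => by ring)
    rw [htv _ _ (adj_uv hm), htv _ _ (adj_u_pw0 hm i0), htv _ _ (adj_pwlast_v hm i0),
      Finset.prod_congr rfl (fun k hk => htv _ _ (adj_pw_succ hm i0
        (by simp only [Finset.mem_range] at hk; omega))),
      hp, Finset.prod_const_one]
    rcases ht (Sum.inl false) with q1|q1 <;> rcases ht (Sum.inl true) with q2|q2 <;>
      rcases ht (pw m n i0 0) with q3|q3 <;> rcases ht (pw m n i0 (m-3)) with q4|q4 <;>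
        rw [q1, q2, q3, q4] <;> simp
  rw [h1] at h2
  exact absurd h2 (by norm_num)

end bal

end BookAux

/-- Every signature of `B(m,n)` is switching isomorphic to exactly one of the
`n+1` signatures `σ_0, σ_1, …, σ_n`; in particular the number of switching
isomorphism classes of signed `B(m,n)` is `n+1`. -/
theorem statement1 (m n : ℕ) (hm : 3 ≤ m) (hn : 1 ≤ n)
    (σ : BookVertex m n → BookVertex m n → ℤ)
    (hσsym : ∀ x y, σ x y = σ y x)
    (hσsign : ∀ x y, bookAdj m n x y → σ x y = 1 ∨ σ x y = -1) :
    ∃! l : ℕ, l ≤ n ∧ SwitchIso m n σ (sigmaL m n l) := by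
  refine ⟨BookAux.negCount m n σ, ⟨BookAux.negCount_le hm σ, BookAux.exists_iso hm hσsym hσsign⟩, ?_⟩
  rintro l' ⟨hl', hiso'⟩
  rcases Nat.lt_or_ge n 2 with hn1 | hn2
  · -- n = 1 : use balance invariance
    have hc : BookAux.negCount m n σ ≤ n := BookAux.negCount_le hm σ
    by_contra hne
    have hiso := BookAux.exists_iso hm hσsym hσsign
    have key : SwitchIso m n σ (sigmaL m n 0) → SwitchIso m n σ (sigmaL m n 1) → False :=
      fun a b => BookAux.not_bal_sigma1 hm hn
        (BookAux.bal_fwd b (BookAux.bal_bwd a BookAux.bal_sigma0))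
    have h01 : (l' = 0 ∧ BookAux.negCount m n σ = 1) ∨
        (l' = 1 ∧ BookAux.negCount m n σ = 0) := by omega
    rcases h01 with ⟨e1, e2⟩ | ⟨e1, e2⟩
    · exact key (e1 ▸ hiso') (e2 ▸ hiso)
    · exact key (e2 ▸ hiso) (e1 ▸ hiso')
  · -- n ≥ 2 : page-sign count is a complete invariant
    have h2 := BookAux.negCount_inv hm hn2 hσsym hiso'
    rw [BookAux.negCount_sigmaL hm hl'] at h2
    exact h2.symm
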